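/- Ray–Reid invariant: let ω, J : ℝ → ℝ be continuously differentiable and let α, β : I → ℝ be twice differentiable functions of t on an interval I with α(t) ≠ 0 for all t, satisfying the equations of motion α̈ = −∂_α V(α,β) and β̈ = −∂_β V(α,β), where V(α,β) = (1/2) ω(α²+β²) + α^{−2} J(β/α). Then the quantity I(t) = (1/2)(α̇ β − α β̇)² + ((α² + β²)/α²) J(β/α) is constant on I. -/

import Mathlib

/-- **Ray–Reid invariant.** For the Ermakov–Ray–Reid system with potential
`V(α,β) = (1/2) ω(α²+β²) + α⁻² J(β/α)` and equations of motion `α̈ = −∂_α V`, `β̈ = −∂_β V`,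
the quantity `I = (1/2)(α̇β − αβ̇)² + ((α²+β²)/α²) J(β/α)` is conserved. -/
theorem ray_reid_invariant (ω J : ℝ → ℝ) (hω : ContDiff ℝ 1 ω) (hJ : ContDiff ℝ 1 J)
    (I : Set ℝ) (hI : IsOpen I) (hIconn : I.OrdConnected)
    (α β : ℝ → ℝ)
    (hα : ∀ t ∈ I, DifferentiableAt ℝ α t) (hα' : ∀ t ∈ I, DifferentiableAt ℝ (deriv α) t)
    (hβ : ∀ t ∈ I, DifferentiableAt ℝ β t) (hβ' : ∀ t ∈ I, DifferentiableAt ℝ (deriv β) t)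
    (hα0 : ∀ t ∈ I, α t ≠ 0)
    -- `α̈ = −∂_α V(α,β)`
    (heomα : ∀ t ∈ I, deriv (deriv α) t =
        -(deriv (fun a => (1/2) * ω (a^2 + (β t)^2) + (a^2)⁻¹ * J (β t / a)) (α t)))
    -- `β̈ = −∂_β V(α,β)`
    (heomβ : ∀ t ∈ I, deriv (deriv β) t =
        -(deriv (fun b => (1/2) * ω ((α t)^2 + b^2) + ((α t)^2)⁻¹ * J (b / α t)) (β t))) :
    ∀ t₁ ∈ I, ∀ t₂ ∈ I,
      (1/2) * (deriv α t₁ * β t₁ - α t₁ * deriv β t₁)^2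
        + (((α t₁)^2 + (β t₁)^2) / (α t₁)^2) * J (β t₁ / α t₁) =
      (1/2) * (deriv α t₂ * β t₂ - α t₂ * deriv β t₂)^2
        + (((α t₂)^2 + (β t₂)^2) / (α t₂)^2) * J (β t₂ / α t₂) := by
  have hJd : ∀ x, HasDerivAt J (deriv J x) x := fun x =>
    ((hJ.differentiable one_ne_zero) x).hasDerivAt
  have hωd : ∀ x, HasDerivAt ω (deriv ω x) x := fun x =>
    ((hω.differentiable one_ne_zero) x).hasDerivAt
  set f : ℝ → ℝ := fun t => (1/2) * (deriv α t * β t - α t * deriv β t)^2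
      + (((α t)^2 + (β t)^2) / (α t)^2) * J (β t / α t) with hf
  have key : ∀ t ∈ I, HasDerivAt f 0 t := by
    intro t ht
    have ha := hα t ht
    have hb := hβ t ht
    have ha0 := hα0 t ht
    have ha2 : (α t)^2 ≠ 0 := pow_ne_zero _ ha0
    set a := α t with ha_def
    set b := β t with hb_def
    set p := deriv α t with hp_def
    set q := deriv β t with hq_def
    set w' := deriv ω (a^2 + b^2) with hw_def
    set j := J (b/a) with hj_def
    set j' := deriv J (b/a) with hj'_def
    -- derivative of the potential in the first slot
    have hVa : HasDerivAt (fun x => (1/2) * ω (x^2 + b^2) + (x^2)⁻¹ * J (b / x))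
        (a * w' - 2*j/a^3 - b*j'/a^4) a := by
      have h1 : HasDerivAt (fun x : ℝ => x^2 + b^2) (2*a) a := by
        simpa using ((hasDerivAt_pow 2 a).add_const (b^2))
      have h2 : HasDerivAt (fun x => ω (x^2 + b^2)) (w' * (2*a)) a := (hωd _).comp a h1
      have h3 : HasDerivAt (fun x : ℝ => (x^2)⁻¹) (-(2*a) / ((a^2)^2)) a := by
        simpa [Pi.inv_def] using ((hasDerivAt_pow 2 a).inv ha2)
      have h4 : HasDerivAt (fun x : ℝ => b / x) (b * (-(a^2)⁻¹)) a :=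
        (hasDerivAt_inv ha0).const_mul b
      have h5 : HasDerivAt (fun x => J (b / x)) (j' * (b * (-(a^2)⁻¹))) a := by
        have := (hJd (b/a)).comp a h4
        simpa [div_eq_mul_inv, Function.comp_def, hj'_def] using this
      have h6 := (h2.const_mul (1/2:ℝ)).add (h3.mul h5)
      refine h6.congr_deriv ?_
      rw [hj_def]
      field_simp
      ring
    -- derivative of the potential in the second slot
    have hVb : HasDerivAt (fun y => (1/2) * ω (a^2 + y^2) + (a^2)⁻¹ * J (y / a))
        (b * w' + j'/a^3) b := by
      have h1 : HasDerivAt (fun y : ℝ => a^2 + y^2) (2*b) b := by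
        simpa using ((hasDerivAt_pow 2 b).const_add (a^2))
      have h2 : HasDerivAt (fun y => ω (a^2 + y^2)) (w' * (2*b)) b := (hωd _).comp b h1
      have h4 : HasDerivAt (fun y : ℝ => y / a) (1/a) b := by
        simpa using (hasDerivAt_id b).div_const a
      have h5 : HasDerivAt (fun y => J (y / a)) (j' * (1/a)) b := (hJd (b/a)).comp b h4
      have h6 := (h2.const_mul (1/2:ℝ)).add (h5.const_mul ((a^2)⁻¹))
      refine h6.congr_deriv ?_
      field_simp
    have hA : HasDerivAt (deriv α) (-(a * w' - 2*j/a^3 - b*j'/a^4)) t := by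
      have h := (hα' t ht).hasDerivAt
      rwa [heomα t ht, hVa.deriv] at h
    have hB : HasDerivAt (deriv β) (-(b * w' + j'/a^3)) t := by
      have h := (hβ' t ht).hasDerivAt
      rwa [heomβ t ht, hVb.deriv] at h
    have hαt : HasDerivAt α p t := ha.hasDerivAt
    have hβt : HasDerivAt β q t := hb.hasDerivAt
    -- L = α̇ β − α β̇
    have hL : HasDerivAt (fun t => deriv α t * β t - α t * deriv β t)
        (((-(a * w' - 2*j/a^3 - b*j'/a^4)) * b + p * q)
          - (p * q + a * (-(b * w' + j'/a^3)))) t :=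
      (hA.mul hβt).sub (hαt.mul hB)
    have hL2 : HasDerivAt (fun t => (1/2) * (deriv α t * β t - α t * deriv β t)^2)
        ((1/2) * (2 * (p * b - a * q)^1 *
          (((-(a * w' - 2*j/a^3 - b*j'/a^4)) * b + p * q)
            - (p * q + a * (-(b * w' + j'/a^3)))))) t :=
      (hL.pow 2).const_mul (1/2 : ℝ)
    have hnum : HasDerivAt (fun t => (α t)^2 + (β t)^2)
        (2 * a^1 * p + 2 * b^1 * q) t := (hαt.pow 2).add (hβt.pow 2)
    have hden : HasDerivAt (fun t => (α t)^2) (2 * a^1 * p) t := hαt.pow 2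
    have hq2 : HasDerivAt (fun t => ((α t)^2 + (β t)^2) / (α t)^2)
        (((2 * a^1 * p + 2 * b^1 * q) * a^2 - (a^2 + b^2) * (2 * a^1 * p)) / (a^2)^2) t :=
      hnum.div hden ha2
    have hu : HasDerivAt (fun t => β t / α t) ((q * a - b * p) / a^2) t := hβt.div hαt ha0
    have hJu : HasDerivAt (fun t => J (β t / α t)) (j' * ((q * a - b * p) / a^2)) t :=
      (hJd (b/a)).comp t hu
    have htot := hL2.add (hq2.mul hJu)
    have h0 : HasDerivAt f
        ((1/2) * (2 * (p * b - a * q)^1 *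
          (((-(a * w' - 2*j/a^3 - b*j'/a^4)) * b + p * q)
            - (p * q + a * (-(b * w' + j'/a^3)))))
         + ((((2 * a^1 * p + 2 * b^1 * q) * a^2 - (a^2 + b^2) * (2 * a^1 * p)) / (a^2)^2)
              * J (b/a)
            + (((a)^2 + (b)^2) / (a)^2) * (j' * ((q * a - b * p) / a^2)))) t := htot
    convert h0 using 1
    rw [← hj_def]
    field_simp
    ring
  -- constancy on the convex set I
  have hconv : Convex ℝ I := by
    rw [convex_iff_ordConnected]; exact hIconn
  intro t₁ ht₁ t₂ ht₂
  have := hconv.is_const_of_fderivWithin_eq_zero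
    (f := f) (fun t ht => ((key t ht).differentiableAt).differentiableWithinAt)
    (fun t ht => by
      rw [fderivWithin_of_isOpen hI ht]
      have := (key t ht).hasFDerivAt.fderiv
      rw [this]; ext; simp) ht₁ ht₂
  simpa [hf] using this
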